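/- arXiv:1409.6276 — 2 statements merged into one kernel-verified Lean document; each statement's English description precedes it below -/
import Mathlib

section
/- Let X₁, …, Xₙ be i.i.d. random variables with the beta-prime distribution of parameters α > 0 and β > 1, and let X̄ₙ = (1/n)∑_{i=1}^n Xᵢ. Then for all z with 0 < z ≤ α/(β−1): (i) Pr{X̄ₙ ≤ z} ≤ [ (z/(1+z))^{α+z−βz} · B(βz−z, β)/B(α,β) ]ⁿ; (ii) Pr{X̄ₙ ≤ z} ≤ [ (B(α, 1+α/z)/B(α,β)) · (1+z)^{1+α/z−β} ]ⁿ. -/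
open MeasureTheory ProbabilityTheory Real
open Set

/-- The Beta function `B(a,b) = Γ(a)Γ(b)/Γ(a+b)`. -/
noncomputable def betaFn (a b : ℝ) : ℝ := Real.Gamma a * Real.Gamma b / Real.Gamma (a + b)



lemma complex_beta_eq (a b : ℝ) :
    Complex.betaIntegral a b = ((∫ u in (0:ℝ)..1, u ^ (a-1) * (1-u) ^ (b-1) : ℝ) : ℂ) := by
  rw [Complex.betaIntegral, ← intervalIntegral.integral_ofReal]
  refine intervalIntegral.integral_congr fun x hx => ?_
  rw [uIcc_of_le zero_le_one] at hx
  rw [Complex.ofReal_mul, Complex.ofReal_cpow hx.1, Complex.ofReal_cpow (by linarith [hx.2])]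
  push_cast
  ring

lemma betaFn_eq_int01 {a b : ℝ} (ha : 0 < a) (hb : 0 < b) :
    ∫ u in Set.Ioo (0:ℝ) 1, u ^ (a-1) * (1-u) ^ (b-1) = betaFn a b := by
  have h := Complex.Gamma_mul_Gamma_eq_betaIntegral (s := (a:ℂ)) (t := (b:ℂ))
    (by simpa using ha) (by simpa using hb)
  rw [complex_beta_eq] at h
  have hab : (0:ℝ) < a + b := by linarith
  have hG : Real.Gamma (a+b) ≠ 0 := (Real.Gamma_pos_of_pos hab).ne'
  have : Real.Gamma a * Real.Gamma b = Real.Gamma (a+b) * ∫ u in (0:ℝ)..1, u ^ (a-1) * (1-u) ^ (b-1) := by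
    have := congrArg Complex.re h
    simpa [← Complex.ofReal_mul, Complex.Gamma_ofReal, ← Complex.ofReal_add] using this
  rw [← MeasureTheory.integral_Ioc_eq_integral_Ioo, ← intervalIntegral.integral_of_le zero_le_one]
  rw [betaFn, eq_div_iff hG, mul_comm]
  linarith [this]


lemma cpow_re_eq {a b x : ℝ} (h0 : 0 ≤ x) (h1 : x ≤ 1) :
    ((x:ℂ) ^ ((a:ℂ)-1) * (1-(x:ℂ)) ^ ((b:ℂ)-1)).re = x ^ (a-1) * (1-x) ^ (b-1) := by
  have e1 : ((a:ℂ)-1) = ((a-1:ℝ):ℂ) := by push_cast; ring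
  have e2 : ((b:ℂ)-1) = ((b-1:ℝ):ℂ) := by push_cast; ring
  have e3 : (1-(x:ℂ)) = ((1-x:ℝ):ℂ) := by push_cast; ring
  rw [e1, e2, e3, ← Complex.ofReal_cpow h0, ← Complex.ofReal_cpow (by linarith),
    ← Complex.ofReal_mul, Complex.ofReal_re]

lemma int01_integrable {a b : ℝ} (ha : 0 < a) (hb : 0 < b) :
    IntegrableOn (fun u : ℝ => u ^ (a-1) * (1-u) ^ (b-1)) (Set.Ioo 0 1) := by
  have h := Complex.betaIntegral_convergent (u := (a:ℂ)) (v := (b:ℂ))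
    (by simpa using ha) (by simpa using hb)
  rw [intervalIntegrable_iff_integrableOn_Ioc_of_le zero_le_one] at h
  have h2 : IntegrableOn (fun x : ℝ => ((x:ℂ) ^ ((a:ℂ)-1) * (1-(x:ℂ)) ^ ((b:ℂ)-1)).re)
      (Set.Ioo 0 1) := (h.mono_set Set.Ioo_subset_Ioc_self).re
  exact IntegrableOn.congr_fun h2 (fun x hx => cpow_re_eq hx.1.le hx.2.le) measurableSet_Ioo



lemma cov_image : (fun u : ℝ => u/(1-u)) '' Ioo 0 1 = Ioi 0 := by
  ext x
  constructor
  · rintro ⟨u, hu, rfl⟩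
    exact div_pos hu.1 (by linarith [hu.2])
  · intro hx
    rw [mem_Ioi] at hx
    have hx1 : (0:ℝ) < 1 + x := by linarith
    refine ⟨x/(1+x), ⟨div_pos hx hx1, ?_⟩, ?_⟩
    · rw [div_lt_one hx1]; linarith
    · show (x/(1+x))/(1 - x/(1+x)) = x
      have h1 : 1 - x/(1+x) = 1/(1+x) := by field_simp; ring
      rw [h1]
      field_simp

lemma cov_inj : InjOn (fun u : ℝ => u/(1-u)) (Ioo 0 1) := by
  intro u hu w hw h
  have h1 : (1:ℝ) - u ≠ 0 := by have := hu.2; intro h'; linarith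
  have h2 : (1:ℝ) - w ≠ 0 := by have := hw.2; intro h'; linarith
  field_simp at h
  linarith

lemma cov_deriv : ∀ u ∈ Ioo (0:ℝ) 1, HasDerivWithinAt (fun u : ℝ => u/(1-u))
    (((1-u)^2)⁻¹) (Ioo 0 1) u := by
  intro u hu
  have h1 : (1:ℝ) - u ≠ 0 := by have := hu.2; intro h'; linarith
  have := (hasDerivAt_id u).div ((hasDerivAt_const u 1).sub (hasDerivAt_id u)) h1
  refine (this.congr_deriv ?_).hasDerivWithinAt
  simp only [Pi.sub_apply, id]
  ring

lemma cov_pointwise {c d u : ℝ} (hu0 : 0 < u) (hu1 : u < 1) :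
    ((1-u)^2)⁻¹ * ((u/(1-u)) ^ (c-1) * (1+u/(1-u)) ^ (-c-d)) = u ^ (c-1) * (1-u) ^ (d-1) := by
  have hv : (0:ℝ) < 1 - u := by linarith
  have h1 : 1 + u/(1-u) = (1-u)⁻¹ := by field_simp; ring
  have h2 : ((1-u)^2)⁻¹ = (1-u) ^ (-2:ℝ) := by
    rw [Real.rpow_neg hv.le, Real.rpow_two]
  rw [h1, h2, Real.div_rpow hu0.le hv.le, Real.inv_rpow hv.le, ← Real.rpow_neg hv.le,
    div_eq_mul_inv, ← Real.rpow_neg hv.le]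
  rw [mul_comm ((1-u) ^ (-2:ℝ)), mul_assoc, mul_assoc, ← Real.rpow_add hv, ← Real.rpow_add hv]
  ring_nf



lemma abs_invsq {u : ℝ} : |((1-u)^2)⁻¹| = ((1-u)^2)⁻¹ :=
  abs_of_nonneg (inv_nonneg.mpr (sq_nonneg _))

lemma betaIoi_integrable {c d : ℝ} (hc : 0 < c) (hd : 0 < d) :
    IntegrableOn (fun x : ℝ => x ^ (c-1) * (1+x) ^ (-c-d)) (Ioi 0) := by
  rw [← cov_image,
    integrableOn_image_iff_integrableOn_abs_deriv_smul measurableSet_Ioo cov_deriv cov_inj]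
  refine (int01_integrable hc hd).congr_fun (fun u hu => ?_) measurableSet_Ioo
  simp only [smul_eq_mul, abs_invsq]
  exact (cov_pointwise hu.1 hu.2).symm

lemma betaIoi_integral {c d : ℝ} (hc : 0 < c) (hd : 0 < d) :
    ∫ x in Ioi (0:ℝ), x ^ (c-1) * (1+x) ^ (-c-d) = betaFn c d := by
  rw [← cov_image,
    integral_image_eq_integral_abs_deriv_smul measurableSet_Ioo cov_deriv cov_inj]
  rw [← betaFn_eq_int01 hc hd]
  refine setIntegral_congr_fun measurableSet_Ioo (fun u hu => ?_)
  simp only [smul_eq_mul, abs_invsq]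
  exact cov_pointwise hu.1 hu.2



lemma betaFn_pos {a b : ℝ} (ha : 0 < a) (hb : 0 < b) : 0 < betaFn a b :=
  div_pos (mul_pos (Real.Gamma_pos_of_pos ha) (Real.Gamma_pos_of_pos hb))
    (Real.Gamma_pos_of_pos (by linarith))

lemma W_measurable (α β : ℝ) : Measurable (fun x : ℝ => ENNReal.ofReal
    (if 0 < x then x ^ (α-1) * (1+x) ^ (-α-β) / betaFn α β else 0)) := by
  apply ENNReal.measurable_ofReal.comp
  refine Measurable.ite measurableSet_Ioi ?_ measurable_const
  exact ((measurable_id.pow measurable_const).mul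
    ((measurable_const.add measurable_id).pow measurable_const)).div_const _

lemma G_measurable (e f : ℝ) : Measurable (fun x : ℝ => ENNReal.ofReal (x ^ e * (1+x) ^ f)) :=
  ENNReal.measurable_ofReal.comp ((measurable_id.pow measurable_const).mul
    ((measurable_const.add measurable_id).pow measurable_const))

lemma lint_density (α β e f : ℝ) (hα : 0 < α) (hβ : 0 < β) (hc : 0 < α + e)
    (hd : 0 < β - e - f) :
    ∫⁻ x, ENNReal.ofReal (x ^ e * (1+x) ^ f)
        ∂(volume.withDensity (fun x => ENNReal.ofReal
          (if 0 < x then x ^ (α-1) * (1+x) ^ (-α-β) / betaFn α β else 0)))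
      = ENNReal.ofReal (betaFn (α+e) (β-e-f) / betaFn α β) := by
  set c := α + e with hcdef
  set d := β - e - f with hddef
  rw [lintegral_withDensity_eq_lintegral_mul volume (W_measurable α β) (G_measurable e f)]
  have key : ∀ x : ℝ, (fun x => ENNReal.ofReal (x ^ e * (1+x) ^ f)) x *
      (fun x => ENNReal.ofReal (if 0 < x then x ^ (α-1) * (1+x) ^ (-α-β) / betaFn α β else 0)) x
      = (Ioi (0:ℝ)).indicator
        (fun x => ENNReal.ofReal (x ^ (c-1) * (1+x) ^ (-c-d) / betaFn α β)) x := by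
    intro x
    by_cases hx : 0 < x
    · simp only []
      rw [Set.indicator_of_mem (mem_Ioi.mpr hx)]
      simp only [if_pos hx]
      rw [← ENNReal.ofReal_mul
        (mul_nonneg (Real.rpow_nonneg hx.le _) (Real.rpow_nonneg (by linarith) _))]
      congr 1
      have h1x : (0:ℝ) < 1 + x := by linarith
      have e1 : x ^ e * x ^ (α-1) = x ^ (c-1) := by
        rw [← Real.rpow_add hx]; congr 1; rw [hcdef]; ring
      have e2 : (1+x) ^ f * (1+x) ^ (-α-β) = (1+x) ^ (-c-d) := by
        rw [← Real.rpow_add h1x]; congr 1; rw [hcdef, hddef]; ring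
      calc x ^ e * (1+x) ^ f * (x ^ (α-1) * (1+x) ^ (-α-β) / betaFn α β)
          = (x ^ e * x ^ (α-1)) * ((1+x) ^ f * (1+x) ^ (-α-β)) / betaFn α β := by ring
        _ = x ^ (c-1) * (1+x) ^ (-c-d) / betaFn α β := by rw [e1, e2]
    · simp only []
      rw [Set.indicator_of_notMem (by simpa using hx)]
      simp only [if_neg hx]
      simp
  calc ∫⁻ x, _ ∂volume = ∫⁻ x, (Ioi (0:ℝ)).indicator
        (fun x => ENNReal.ofReal (x ^ (c-1) * (1+x) ^ (-c-d) / betaFn α β)) x ∂volume := by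
        exact lintegral_congr fun a => by rw [Pi.mul_apply, mul_comm]; exact key a
    _ = ∫⁻ x in Ioi 0, ENNReal.ofReal (x ^ (c-1) * (1+x) ^ (-c-d) / betaFn α β) ∂volume := by
        rw [lintegral_indicator measurableSet_Ioi]
    _ = ENNReal.ofReal (∫ x in Ioi 0, x ^ (c-1) * (1+x) ^ (-c-d) / betaFn α β) := by
        rw [← ofReal_integral_eq_lintegral_ofReal ((betaIoi_integrable hc hd).div_const _)]
        exact (ae_restrict_of_forall_mem measurableSet_Ioi fun x hx =>
          div_nonneg (mul_nonneg (Real.rpow_nonneg (le_of_lt hx) _)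
            (Real.rpow_nonneg (by have : (0:ℝ) < x := hx; linarith) _))
            (betaFn_pos hα hβ).le)
    _ = ENNReal.ofReal (betaFn c d / betaFn α β) := by
        rw [integral_div, betaIoi_integral hc hd]


lemma log_tangent1 {x z : ℝ} (hx : 0 < x) (hz : 0 < z) :
    Real.log (1+z) - Real.log z - (x - z)/(z*(1+z)) ≤ Real.log (1+x) - Real.log x := by
  have h1x : (0:ℝ) < 1 + x := by linarith
  have h1z : (0:ℝ) < 1 + z := by linarith
  have hy : (0:ℝ) < x*(1+z)/(z*(1+x)) := by positivity
  have hlog := Real.log_le_sub_one_of_pos hy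
  have hexpand : Real.log (x*(1+z)/(z*(1+x)))
      = Real.log x + Real.log (1+z) - Real.log z - Real.log (1+x) := by
    rw [Real.log_div (by positivity) (by positivity), Real.log_mul hx.ne' h1z.ne',
      Real.log_mul hz.ne' h1x.ne']
    ring
  have hval : x*(1+z)/(z*(1+x)) - 1 = (x - z)/(z*(1+x)) := by
    field_simp
    ring
  have hcompare : (x - z)/(z*(1+x)) ≤ (x - z)/(z*(1+z)) := by
    have hkey : (x - z)/(z*(1+x)) - (x - z)/(z*(1+z)) = -((x-z)^2/(z*(1+x)*(1+z))) := by
      field_simp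
      ring
    nlinarith [sq_nonneg (x - z), mul_pos (mul_pos hz h1x) h1z,
      div_nonneg (sq_nonneg (x-z)) (mul_pos (mul_pos hz h1x) h1z).le]
  rw [hexpand, hval] at hlog
  linarith

lemma log_tangent2 {x z : ℝ} (hx : 0 < x) (hz : 0 < z) :
    Real.log (1+x) ≤ Real.log (1+z) + (x - z)/(1+z) := by
  have h1x : (0:ℝ) < 1 + x := by linarith
  have h1z : (0:ℝ) < 1 + z := by linarith
  have hy : (0:ℝ) < (1+x)/(1+z) := by positivity
  have hlog := Real.log_le_sub_one_of_pos hy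
  rw [Real.log_div h1x.ne' h1z.ne'] at hlog
  have : (1+x)/(1+z) - 1 = (x - z)/(1+z) := by field_simp; ring
  linarith


lemma sum_log1 {n : ℕ} {x : Fin n → ℝ} {z : ℝ} (hz : 0 < z) (hpos : ∀ i, 0 < x i)
    (hsum : ∑ i, x i ≤ n * z) :
    (n:ℝ) * (Real.log (1+z) - Real.log z) ≤ ∑ i, (Real.log (1+x i) - Real.log (x i)) := by
  have h1z : (0:ℝ) < 1 + z := by linarith
  have hc : (0:ℝ) < z*(1+z) := by positivity
  have h1 : ∑ i, (Real.log (1+z) - Real.log z - (x i - z)/(z*(1+z)))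
      ≤ ∑ i, (Real.log (1+x i) - Real.log (x i)) :=
    Finset.sum_le_sum fun i _ => log_tangent1 (hpos i) hz
  have h2 : ∑ i, (Real.log (1+z) - Real.log z - (x i - z)/(z*(1+z)))
      = (n:ℝ) * (Real.log (1+z) - Real.log z) - ((∑ i, x i) - n*z)/(z*(1+z)) := by
    rw [Finset.sum_sub_distrib, Finset.sum_const, Finset.card_univ, Fintype.card_fin,
      nsmul_eq_mul, ← Finset.sum_div, Finset.sum_sub_distrib, Finset.sum_const,
      Finset.card_univ, Fintype.card_fin, nsmul_eq_mul]
  have h3 : ((∑ i, x i) - n*z)/(z*(1+z)) ≤ 0 :=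
    div_nonpos_of_nonpos_of_nonneg (by linarith) hc.le
  linarith

lemma sum_log2 {n : ℕ} {x : Fin n → ℝ} {z : ℝ} (hz : 0 < z) (hpos : ∀ i, 0 < x i)
    (hsum : ∑ i, x i ≤ n * z) :
    ∑ i, Real.log (1+x i) ≤ (n:ℝ) * Real.log (1+z) := by
  have h1z : (0:ℝ) < 1 + z := by linarith
  have h1 : ∑ i, Real.log (1+x i) ≤ ∑ i, (Real.log (1+z) + (x i - z)/(1+z)) :=
    Finset.sum_le_sum fun i _ => log_tangent2 (hpos i) hz
  have h2 : ∑ i, (Real.log (1+z) + (x i - z)/(1+z))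
      = (n:ℝ) * Real.log (1+z) + ((∑ i, x i) - n*z)/(1+z) := by
    rw [Finset.sum_add_distrib, Finset.sum_const, Finset.card_univ, Fintype.card_fin,
      nsmul_eq_mul, ← Finset.sum_div, Finset.sum_sub_distrib, Finset.sum_const,
      Finset.card_univ, Fintype.card_fin, nsmul_eq_mul]
  have h3 : ((∑ i, x i) - n*z)/(1+z) ≤ 0 :=
    div_nonpos_of_nonpos_of_nonneg (by linarith) h1z.le
  linarith

lemma prod_rpow_ge {n : ℕ} {x : Fin n → ℝ} (hpos : ∀ i, 0 < x i) {e f z : ℝ} (hz : 0 < z)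
    (hlog : (n:ℝ) * (e * Real.log z + f * Real.log (1+z))
      ≤ ∑ i, (e * Real.log (x i) + f * Real.log (1 + x i))) :
    (z ^ e * (1+z) ^ f) ^ n ≤ ∏ i, (x i ^ e * (1 + x i) ^ f) := by
  have h1z : (0:ℝ) < 1 + z := by linarith
  have lhs_eq : (z ^ e * (1+z) ^ f) ^ n = Real.exp ((n:ℝ) * (e * Real.log z + f * Real.log (1+z))) := by
    rw [Real.rpow_def_of_pos hz, Real.rpow_def_of_pos h1z, ← Real.exp_add, ← Real.exp_nat_mul]
    ring_nf
  have rhs_eq : ∏ i, (x i ^ e * (1 + x i) ^ f)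
      = Real.exp (∑ i, (e * Real.log (x i) + f * Real.log (1 + x i))) := by
    rw [Real.exp_sum]
    refine Finset.prod_congr rfl fun i _ => ?_
    rw [Real.rpow_def_of_pos (hpos i), Real.rpow_def_of_pos (by linarith [hpos i]), ← Real.exp_add]
    ring_nf
  rw [lhs_eq, rhs_eq]
  exact Real.exp_le_exp.mpr hlog


lemma lintegral_finset_prod_of_indep {Ω : Type*} [MeasurableSpace Ω] {P : Measure Ω}
    [IsProbabilityMeasure P] {n : ℕ} {F : Fin n → Ω → ENNReal} (hF : ∀ i, Measurable (F i))
    (hindep : iIndepFun F P) (s : Finset (Fin n)) :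
    ∫⁻ ω, ∏ i ∈ s, F i ω ∂P = ∏ i ∈ s, ∫⁻ ω, F i ω ∂P := by
  classical
  induction s using Finset.cons_induction with
  | empty => simp
  | cons i s hi ih =>
    have hprodmeas : Measurable (∏ j ∈ s, F j) := by
      rw [Finset.prod_fn]; exact s.measurable_prod fun j _ => hF j
    have hmul := lintegral_mul_eq_lintegral_mul_lintegral_of_indepFun (hF i) hprodmeas
        ((hindep.indepFun_finsetProd_of_notMem hF hi).symm)
    simp only [Pi.mul_apply, Finset.prod_apply] at hmul
    have hl : lintegral P (∏ c ∈ s, F c) = ∫⁻ ω, ∏ j ∈ s, F j ω ∂P := by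
      congr 1; ext ω; simp [Finset.prod_apply]
    simp only [Finset.prod_cons]
    rw [hmul, ih]



lemma ofReal_prod_nonneg {ι : Type*} (s : Finset ι) (g : ι → ℝ) (h : ∀ i ∈ s, 0 ≤ g i) :
    ENNReal.ofReal (∏ i ∈ s, g i) = ∏ i ∈ s, ENNReal.ofReal (g i) := by
  classical
  induction s using Finset.cons_induction with
  | empty => simp
  | cons i s hi ih =>
    rw [Finset.prod_cons, Finset.prod_cons, ENNReal.ofReal_mul (h i (Finset.mem_cons_self i s)),
      ih fun j hj => h j (Finset.mem_cons_of_mem hj)]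

theorem main_bound
    {Ω : Type*} [MeasurableSpace Ω] (P : Measure Ω) [IsProbabilityMeasure P]
    (n : ℕ) (hn : 0 < n) (X : Fin n → Ω → ℝ) (α β : ℝ) (hα : 0 < α) (hβ : 0 < β)
    (hmeas : ∀ i, Measurable (X i))
    (hindep : iIndepFun X P)
    (hdist : ∀ i, Measure.map (X i) P =
      volume.withDensity (fun x => ENNReal.ofReal
        (if 0 < x then x ^ (α - 1) * (1 + x) ^ (-α - β) / betaFn α β else 0)))
    (z e f : ℝ) (hz0 : 0 < z) (hc : 0 < α + e) (hd : 0 < β - e - f)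
    (hlog : ∀ (x : Fin n → ℝ), (∀ i, 0 < x i) → (∑ i, x i) ≤ n * z →
      (n:ℝ) * (e * Real.log z + f * Real.log (1+z))
        ≤ ∑ i, (e * Real.log (x i) + f * Real.log (1 + x i))) :
    P {ω | (∑ i, X i ω) / n ≤ z} ≤
      ENNReal.ofReal ((betaFn (α+e) (β-e-f) / betaFn α β / (z ^ e * (1+z) ^ f)) ^ n) := by
  have h1z : (0:ℝ) < 1 + z := by linarith
  set W := fun x : ℝ => ENNReal.ofReal
    (if 0 < x then x ^ (α - 1) * (1 + x) ^ (-α - β) / betaFn α β else 0) with hW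
  set E : ℝ := betaFn (α+e) (β-e-f) / betaFn α β with hE
  have hEpos : 0 < E := div_pos (betaFn_pos hc hd) (betaFn_pos hα hβ)
  set gz : ℝ := z ^ e * (1+z) ^ f with hgz
  have hgzpos : 0 < gz := mul_pos (Real.rpow_pos_of_pos hz0 _) (Real.rpow_pos_of_pos h1z _)
  -- the transformed random variables
  set G : ℝ → ENNReal := fun x => ENNReal.ofReal (x ^ e * (1+x) ^ f) with hG
  have hGmeas : Measurable G := G_measurable e f
  set F : Fin n → Ω → ENNReal := fun i ω => G (X i ω) with hF
  have hFmeas : ∀ i, Measurable (F i) := fun i => hGmeas.comp (hmeas i)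
  have hFindep : iIndepFun F P :=
    hindep.comp (fun _ => G) (fun _ => hGmeas)
  -- expectation of each
  have hFexp : ∀ i, ∫⁻ ω, F i ω ∂P = ENNReal.ofReal E := by
    intro i
    have : ∫⁻ ω, F i ω ∂P = ∫⁻ x, G x ∂(Measure.map (X i) P) :=
      (lintegral_map hGmeas (hmeas i)).symm
    rw [this, hdist i]
    exact lint_density α β e f hα hβ hc hd
  -- a.s. positivity
  have hpos_ae : ∀ᵐ ω ∂P, ∀ i, 0 < X i ω := by
    rw [ae_all_iff]
    intro i
    have hmap : P {ω | ¬ 0 < X i ω} = (Measure.map (X i) P) (Iic 0) := by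
      rw [Measure.map_apply (hmeas i) measurableSet_Iic]
      congr 1
      ext ω
      simp [not_lt]
    rw [ae_iff, hmap, hdist i, withDensity_apply _ measurableSet_Iic]
    rw [setLIntegral_congr_fun measurableSet_Iic
      (fun x hx => show W x = (0:ENNReal) by
        simp only [hW]
        rw [if_neg (not_lt.mpr (mem_Iic.mp hx)), ENNReal.ofReal_zero])]
    simp
  -- Markov
  set S := {ω | (∑ i, X i ω) / n ≤ z} with hS
  set ε : ENNReal := ENNReal.ofReal (gz ^ n) with hε
  have hsub : S ≤ᵐ[P] {ω | ε ≤ ∏ i, F i ω} := by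
    filter_upwards [hpos_ae] with ω hω hmem
    have hsum : ∑ i, X i ω ≤ n * z := by
      have hn' : (0:ℝ) < n := Nat.cast_pos.mpr hn
      have := (div_le_iff₀ hn').mp hmem
      linarith
    have hreal : gz ^ n ≤ ∏ i, (X i ω ^ e * (1 + X i ω) ^ f) :=
      prod_rpow_ge hω hz0 (hlog _ hω hsum)
    have : ε ≤ ENNReal.ofReal (∏ i, (X i ω ^ e * (1 + X i ω) ^ f)) :=
      ENNReal.ofReal_le_ofReal hreal
    rwa [ofReal_prod_nonneg _ _ (fun i _ => mul_nonneg (Real.rpow_nonneg (hω i).le _)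
      (Real.rpow_nonneg (by linarith [hω i]) _))] at this
  have hmarkov : ε * P {ω | ε ≤ ∏ i, F i ω} ≤ ∫⁻ ω, ∏ i, F i ω ∂P :=
    mul_meas_ge_le_lintegral₀ (Finset.aemeasurable_fun_prod _ fun i _ => (hFmeas i).aemeasurable) ε
  have hprod : ∫⁻ ω, ∏ i, F i ω ∂P = ENNReal.ofReal E ^ n := by
    rw [lintegral_finset_prod_of_indep hFmeas hFindep]
    simp [hFexp, Finset.prod_const, Finset.card_univ]
  have hεne : ε ≠ 0 := by
    simp only [hε, ne_eq, ENNReal.ofReal_eq_zero, not_le]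
    positivity
  have hεtop : ε ≠ ⊤ := ENNReal.ofReal_ne_top
  have hfinal : P S ≤ ENNReal.ofReal E ^ n / ε := by
    refine le_trans (measure_mono_ae hsub) ?_
    rw [ENNReal.le_div_iff_mul_le (Or.inl hεne) (Or.inl hεtop)]
    rw [mul_comm]
    rw [← hprod]
    exact hmarkov
  refine hfinal.trans_eq ?_
  rw [← ENNReal.ofReal_pow hEpos.le, hε,
    ← ENNReal.ofReal_div_of_pos (by positivity)]
  congr 1
  rw [div_pow, hE, div_pow, div_pow]

/-- Lower tail bounds for the sample mean of `n` i.i.d. beta-prime random variables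
with parameters `α > 0`, `β > 1`. -/
theorem betaPrime_sample_mean_tail
    {Ω : Type*} [MeasurableSpace Ω] (P : Measure Ω) [IsProbabilityMeasure P]
    (n : ℕ) (hn : 0 < n) (X : Fin n → Ω → ℝ) (α β : ℝ) (hα : 0 < α) (hβ : 1 < β)
    (hmeas : ∀ i, Measurable (X i))
    (hindep : iIndepFun X P)
    (hdist : ∀ i, Measure.map (X i) P =
      volume.withDensity (fun x => ENNReal.ofReal
        (if 0 < x then x ^ (α - 1) * (1 + x) ^ (-α - β) / betaFn α β else 0)))
    (z : ℝ) (hz0 : 0 < z) (hz : z ≤ α / (β - 1)) :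
    P {ω | (∑ i, X i ω) / n ≤ z} ≤
      ENNReal.ofReal
        (((z / (1 + z)) ^ (α + z - β * z) * betaFn (β * z - z) β / betaFn α β) ^ n) ∧
    P {ω | (∑ i, X i ω) / n ≤ z} ≤
      ENNReal.ofReal
        ((betaFn α (1 + α / z) / betaFn α β * (1 + z) ^ (1 + α / z - β)) ^ n) := by
  have hβ0 : (0:ℝ) < β := by linarith
  have h1z : (0:ℝ) < 1 + z := by linarith
  have hβ1 : (0:ℝ) < β - 1 := by linarith
  have hzα : z * (β - 1) ≤ α := by
    have := (le_div_iff₀ hβ1).mp hz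
    linarith
  have hB : (0:ℝ) < betaFn α β := betaFn_pos hα hβ0
  constructor
  · -- first bound
    set r : ℝ := α + z - β * z with hr
    have hr0 : 0 ≤ r := by rw [hr]; nlinarith
    have hc : 0 < α + -r := by rw [hr]; nlinarith
    have hd : 0 < β - -r - r := by linarith
    have hlog : ∀ (x : Fin n → ℝ), (∀ i, 0 < x i) → (∑ i, x i) ≤ n * z →
        (n:ℝ) * (-r * Real.log z + r * Real.log (1+z))
          ≤ ∑ i, (-r * Real.log (x i) + r * Real.log (1 + x i)) := by
      intro x hpos hsum
      have h := sum_log1 hz0 hpos hsum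
      have h2 := mul_le_mul_of_nonneg_left h hr0
      calc (n:ℝ) * (-r * Real.log z + r * Real.log (1+z))
          = r * ((n:ℝ) * (Real.log (1+z) - Real.log z)) := by ring
        _ ≤ r * ∑ i, (Real.log (1+x i) - Real.log (x i)) := h2
        _ = ∑ i, (-r * Real.log (x i) + r * Real.log (1 + x i)) := by
            rw [Finset.mul_sum]; exact Finset.sum_congr rfl fun i _ => by ring
    have hmain := main_bound P n hn X α β hα hβ0 hmeas hindep hdist z (-r) r hz0 hc hd hlog
    refine hmain.trans_eq ?_
    congr 1
    congr 1
    have hzr : (0:ℝ) < z ^ r := Real.rpow_pos_of_pos hz0 r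
    have h1zr : (0:ℝ) < (1+z) ^ r := Real.rpow_pos_of_pos h1z r
    have harg : α + -r = β * z - z := by rw [hr]; ring
    have harg2 : β - -r - r = β := by ring
    rw [harg, harg2, Real.rpow_neg hz0.le, Real.div_rpow hz0.le h1z.le]
    field_simp
  · -- second bound
    set t : ℝ := 1 + α / z - β with ht
    have ht0 : 0 ≤ t := by
      rw [ht]
      have : β - 1 ≤ α / z := (le_div_iff₀ hz0).mpr (by linarith)
      linarith
    have hc : 0 < α + 0 := by linarith
    have hd : 0 < β - 0 - -t := by
      rw [ht]
      have : 0 < α / z := div_pos hα hz0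
      linarith
    have hlog : ∀ (x : Fin n → ℝ), (∀ i, 0 < x i) → (∑ i, x i) ≤ n * z →
        (n:ℝ) * (0 * Real.log z + -t * Real.log (1+z))
          ≤ ∑ i, (0 * Real.log (x i) + -t * Real.log (1 + x i)) := by
      intro x hpos hsum
      have h := sum_log2 hz0 hpos hsum
      have h2 := mul_le_mul_of_nonneg_left h ht0
      calc (n:ℝ) * (0 * Real.log z + -t * Real.log (1+z))
          = -(t * ((n:ℝ) * Real.log (1+z))) := by ring
        _ ≤ -(t * ∑ i, Real.log (1+x i)) := by linarith
        _ = ∑ i, (0 * Real.log (x i) + -t * Real.log (1 + x i)) := by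
            rw [Finset.mul_sum, ← Finset.sum_neg_distrib]
            exact Finset.sum_congr rfl fun i _ => by ring
    have hmain := main_bound P n hn X α β hα hβ0 hmeas hindep hdist z 0 (-t) hz0 hc hd hlog
    refine hmain.trans_eq ?_
    congr 1
    congr 1
    have h1zt : (0:ℝ) < (1+z) ^ t := Real.rpow_pos_of_pos h1z t
    have harg : β - 0 - -t = 1 + α / z := by rw [ht]; ring
    have harg2 : α + 0 = α := by ring
    have harg3 : (1:ℝ) + α / z - β = t := by rw [ht]
    rw [harg, harg2, Real.rpow_zero, Real.rpow_neg h1z.le, one_mul]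
    field_simp
end

section
/- Let X₁, …, Xₙ be i.i.d. random variables with the Nakagami distribution of parameters m ≥ 1/2 and σ > 0, and let X̄ₙ = (1/n)∑_{i=1}^n Xᵢ. Then: (i) for every ϑ with 0 < ϑ ≤ m, Pr{ X̄ₙ ≤ σ·Γ(ϑ+1/2)/Γ(ϑ) } ≤ [ (Γ(ϑ)/Γ(m)) · (Γ(ϑ+1/2)/Γ(ϑ))^{2(m−ϑ)} ]ⁿ; (ii) for every z ≥ √m·σ, Pr{X̄ₙ ≥ z} ≤ [ (z²/(mσ²))^m · exp(m − z²/σ²) ]ⁿ. -/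
open MeasureTheory ProbabilityTheory Real Set

lemma gauss_gamma {b s : ℝ} (hb : 0 < b) (hs : 0 < s) :
    ∫ x in Ioi (0:ℝ), x ^ (2*s - 1) * Real.exp (-(b * x ^ 2)) = 1/2 * ((1/b) ^ s * Real.Gamma s) := by
  have hcast : ((2:ℕ):ℝ) = (2:ℝ) := by norm_num
  calc ∫ x in Ioi (0:ℝ), x ^ (2*s - 1) * Real.exp (-(b * x ^ 2))
      = ∫ x in Ioi (0:ℝ), (|(2:ℝ)| * x ^ ((2:ℝ) - 1)) •
          ((fun y : ℝ => (1/2 : ℝ) * (y ^ (s-1) * Real.exp (-(b*y)))) (x ^ (2:ℝ))) := by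
        refine setIntegral_congr_fun measurableSet_Ioi (fun x hx => ?_)
        have hx0 : (0:ℝ) < x := hx
        have e2 : x ^ (2:ℝ) = x ^ (2:ℕ) := by rw [← hcast, rpow_natCast]
        have e3 : (x ^ (2:ℕ)) ^ (s - 1) = x ^ (2*(s-1)) := by
          rw [← rpow_natCast x 2, ← rpow_mul hx0.le, hcast]
        have e4 : x ^ (2*s-1) = x * x ^ (2*(s-1)) := by
          rw [show 2*s-1 = 1 + 2*(s-1) by ring, Real.rpow_add hx0, rpow_one]
        simp only [smul_eq_mul, e2]
        rw [e3, e4, show (2:ℝ)-1 = 1 by norm_num, rpow_one,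
          abs_of_pos (by norm_num : (0:ℝ) < 2)]
        ring
    _ = ∫ y in Ioi (0:ℝ), (1/2 : ℝ) * (y ^ (s-1) * Real.exp (-(b*y))) := by
        exact integral_comp_rpow_Ioi (fun y : ℝ => (1/2 : ℝ) * (y ^ (s-1) * Real.exp (-(b*y)))) (two_ne_zero (α := ℝ))
    _ = 1/2 * ((1/b) ^ s * Real.Gamma s) := by
        rw [integral_const_mul, integral_rpow_mul_exp_neg_mul_Ioi hs hb]

lemma lintegral_prod_indep {Ω ι : Type*} [MeasurableSpace Ω] {P : Measure Ω}
    [IsProbabilityMeasure P] {g : ι → Ω → ENNReal}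
    (hg : ∀ i, Measurable (g i))
    (hindep : iIndepFun g P) (s : Finset ι) :
    ∫⁻ ω, ∏ i ∈ s, g i ω ∂P = ∏ i ∈ s, ∫⁻ ω, g i ω ∂P := by
  classical
  induction s using Finset.induction_on with
  | empty => simp
  | @insert i s hi ih =>
    simp only [Finset.prod_insert hi]
    rw [← ih]
    have hfe : (∏ j ∈ s, g j) = fun ω => ∏ j ∈ s, g j ω := by
      ext ω; simp [Finset.prod_apply]
    have hind := (hindep.indepFun_finsetProd_of_notMem hg hi).symm
    rw [hfe] at hind
    have := lintegral_mul_eq_lintegral_mul_lintegral_of_indepFun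
      (hg i) (s.measurable_prod fun j _ => hg j) hind
    simpa [Finset.prod_apply] using this

lemma meas_le_lintegral_of_one_le {Ω : Type*} [MeasurableSpace Ω] {P : Measure Ω}
    {A : Set Ω} {G : Ω → ENNReal} (hG : AEMeasurable G P)
    (h : ∀ ω ∈ A, 1 ≤ G ω) : P A ≤ ∫⁻ ω, G ω ∂P := by
  calc P A ≤ P {ω | 1 ≤ G ω} := measure_mono h
    _ = 1 * P {ω | 1 ≤ G ω} := (one_mul _).symm
    _ ≤ ∫⁻ ω, G ω ∂P := mul_meas_ge_le_lintegral₀ hG 1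

lemma prod_le_one_of_sum {n : ℕ} (hn : 0 < n) (p : Fin n → ℝ) (hp : ∀ i, 0 ≤ p i)
    (hsum : ∑ i, p i ≤ n) : ∏ i, p i ≤ 1 := by
  have hn' : (0:ℝ) < n := by exact_mod_cast hn
  have hw : ∑ _i : Fin n, (n:ℝ)⁻¹ = 1 := by
    simp [Finset.sum_const, Finset.card_univ]
    field_simp
  have hgm := Real.geom_mean_le_arith_mean_weighted Finset.univ (fun _ => (n:ℝ)⁻¹) p
    (fun i _ => by positivity) hw (fun i _ => hp i)
  have h1 : ∏ i, p i ^ ((n:ℝ)⁻¹) = (∏ i, p i) ^ ((n:ℝ)⁻¹) := by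
    rw [← Real.finset_prod_rpow _ _ (fun i _ => hp i)]
  have h2 : ∑ i, (n:ℝ)⁻¹ * p i ≤ 1 := by
    rw [← Finset.mul_sum]
    rw [inv_mul_le_iff₀ hn', mul_one]
    exact hsum
  have h3 : (∏ i, p i) ^ ((n:ℝ)⁻¹) ≤ 1 := h1 ▸ (hgm.trans h2)
  have hprodnn : 0 ≤ ∏ i, p i := Finset.prod_nonneg (fun i _ => hp i)
  have h4 : ((∏ i, p i) ^ ((n:ℝ)⁻¹)) ^ (n:ℕ) = ∏ i, p i := by
    rw [← rpow_natCast (((∏ i, p i) ^ ((n:ℝ)⁻¹))) n, ← rpow_mul hprodnn,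
      inv_mul_cancel₀ (ne_of_gt hn'), rpow_one]
  calc ∏ i, p i = ((∏ i, p i) ^ ((n:ℝ)⁻¹)) ^ (n:ℕ) := h4.symm
    _ ≤ 1 := pow_le_one₀ (rpow_nonneg hprodnn _) h3

lemma lintegral_nakagami {m σ : ℝ} {Ω : Type*} [MeasurableSpace Ω] {P : Measure Ω}
    {Y : Ω → ℝ} (hY : Measurable Y)
    (hd : Measure.map Y P = volume.withDensity (fun x => ENNReal.ofReal
        (if 0 < x then
          2 / Real.Gamma m * (x ^ (2 * m - 1) / σ ^ (2 * m)) * Real.exp (-x ^ 2 / σ ^ 2)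
        else 0)))
    (φ : ℝ → ENNReal) (hφ : Measurable φ) (g : ℝ → ℝ)
    (hg : ∀ x ∈ Ioi (0:ℝ), ENNReal.ofReal
        (2 / Real.Gamma m * (x ^ (2 * m - 1) / σ ^ (2 * m)) * Real.exp (-x ^ 2 / σ ^ 2)) * φ x
        = ENNReal.ofReal (g x))
    (hgint : IntegrableOn g (Ioi 0)) (hgpos : ∀ x ∈ Ioi (0:ℝ), 0 ≤ g x) :
    ∫⁻ ω, φ (Y ω) ∂P = ENNReal.ofReal (∫ x in Ioi (0:ℝ), g x) := by
  have hdm : Measurable (fun x : ℝ => ENNReal.ofReal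
      (if 0 < x then
        2 / Real.Gamma m * (x ^ (2 * m - 1) / σ ^ (2 * m)) * Real.exp (-x ^ 2 / σ ^ 2)
      else 0)) := by
    exact Measurable.ennreal_ofReal
      (Measurable.ite measurableSet_Ioi (by fun_prop) measurable_const)
  rw [← lintegral_map hφ hY, hd, lintegral_withDensity_eq_lintegral_mul _ hdm hφ]
  have heq : ∀ x : ℝ, ((fun x => ENNReal.ofReal
      (if 0 < x then
        2 / Real.Gamma m * (x ^ (2 * m - 1) / σ ^ (2 * m)) * Real.exp (-x ^ 2 / σ ^ 2)
      else 0)) * φ) x = Set.indicator (Ioi 0) (fun x => ENNReal.ofReal (g x)) x := by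
    intro x
    simp only [Pi.mul_apply]
    by_cases hx : 0 < x
    · rw [if_pos hx, Set.indicator_of_mem (by exact hx), hg x hx]
    · rw [if_neg hx, Set.indicator_of_notMem (by simpa using hx)]
      simp
  rw [lintegral_congr heq, lintegral_indicator measurableSet_Ioi _]
  rw [← ofReal_integral_eq_lintegral_ofReal hgint
    ((ae_restrict_iff' measurableSet_Ioi).mpr (Filter.Eventually.of_forall hgpos))]

lemma nakagami_low_moment {m σ ϑ : ℝ} (hσ : 0 < σ) (hϑ : 0 < ϑ) (hϑm : ϑ ≤ m)
    {Ω : Type*} [MeasurableSpace Ω] {P : Measure Ω} {Y : Ω → ℝ} (hY : Measurable Y)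
    (hd : Measure.map Y P = volume.withDensity (fun x => ENNReal.ofReal
        (if 0 < x then
          2 / Real.Gamma m * (x ^ (2 * m - 1) / σ ^ (2 * m)) * Real.exp (-x ^ 2 / σ ^ 2)
        else 0))) :
    ∫⁻ ω, (ENNReal.ofReal (Y ω / (Real.Gamma (ϑ + 1/2) / Real.Gamma ϑ * σ))) ^ (-(2*(m-ϑ))) ∂P
      = ENNReal.ofReal (Real.Gamma ϑ / Real.Gamma m
          * (Real.Gamma (ϑ + 1/2) / Real.Gamma ϑ) ^ (2 * (m - ϑ))) := by
  have hm0 : 0 < m := lt_of_lt_of_le hϑ hϑm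
  have hΓm : 0 < Real.Gamma m := Real.Gamma_pos_of_pos hm0
  have hΓϑ : 0 < Real.Gamma ϑ := Real.Gamma_pos_of_pos hϑ
  have hΓh : 0 < Real.Gamma (ϑ + 1/2) := Real.Gamma_pos_of_pos (by linarith)
  set r : ℝ := Real.Gamma (ϑ + 1/2) / Real.Gamma ϑ with hr
  have hr0 : 0 < r := div_pos hΓh hΓϑ
  set c : ℝ := r * σ with hc
  have hc0 : 0 < c := mul_pos hr0 hσ
  set s : ℝ := 2*(m-ϑ) with hsdef
  have hs0 : 0 ≤ s := by simp only [hsdef]; linarith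
  set φ : ℝ → ENNReal := fun x => (ENNReal.ofReal (x / c)) ^ (-s) with hφdef
  have hφm : Measurable φ :=
    (Measurable.ennreal_ofReal (measurable_id.div_const c)).pow measurable_const
  set C : ℝ := 2 / Real.Gamma m / σ ^ (2*m) * c ^ s with hC
  have hσ2m : (0:ℝ) < σ ^ (2*m) := rpow_pos_of_pos hσ _
  have hC0 : 0 ≤ C := by positivity
  set g : ℝ → ℝ := fun x => C * (x ^ (2*ϑ - 1) * Real.exp (-((σ^2)⁻¹ * x ^ 2))) with hgdef
  have hb : (0:ℝ) < (σ^2)⁻¹ := by positivity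
  have key : ∫⁻ ω, φ (Y ω) ∂P = ENNReal.ofReal (∫ x in Ioi (0:ℝ), g x) := by
    refine lintegral_nakagami hY hd φ hφm g (fun x hx => ?_) ?_ (fun x hx => ?_)
    · have hx0 : (0:ℝ) < x := hx
      have hden : 0 ≤ 2 / Real.Gamma m * (x ^ (2 * m - 1) / σ ^ (2 * m))
          * Real.exp (-x ^ 2 / σ ^ 2) := by positivity
      have hφx : φ x = ENNReal.ofReal ((x/c) ^ (-s)) := by
        rw [hφdef]
        exact ENNReal.ofReal_rpow_of_pos (div_pos hx0 hc0)
      rw [hφx, ← ENNReal.ofReal_mul hden]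
      congr 1
      have e1 : (x/c) ^ (-s) = x ^ (-s) * c ^ s := by
        rw [Real.div_rpow hx0.le hc0.le, Real.rpow_neg hc0.le]; field_simp
      have e2 : x ^ (2*m-1) * x ^ (-s) = x ^ (2*ϑ - 1) := by
        rw [← Real.rpow_add hx0]
        congr 1
        simp only [hsdef]; ring
      have e3 : Real.exp (-x^2/σ^2) = Real.exp (-((σ^2)⁻¹ * x ^ 2)) := by
        congr 1; field_simp
      rw [hgdef, hC]
      calc 2 / Real.Gamma m * (x ^ (2 * m - 1) / σ ^ (2 * m)) * Real.exp (-x ^ 2 / σ ^ 2)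
            * ((x/c) ^ (-s))
          = 2 / Real.Gamma m / σ ^ (2*m) * c ^ s
            * ((x ^ (2*m-1) * x ^ (-s)) * Real.exp (-x^2/σ^2)) := by
            rw [e1]; ring
        _ = 2 / Real.Gamma m / σ ^ (2*m) * c ^ s
            * (x ^ (2*ϑ - 1) * Real.exp (-((σ^2)⁻¹ * x ^ 2))) := by rw [e2, e3]
    · apply Integrable.const_mul
      have := integrableOn_rpow_mul_exp_neg_mul_sq hb (s := 2*ϑ - 1) (by linarith)
      refine this.congr_fun (fun x hx => ?_) measurableSet_Ioi
      simp [neg_mul]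
    · have hx0 : (0:ℝ) < x := hx
      simp only [hgdef]
      positivity
  rw [key]
  congr 1
  have hint : ∫ x in Ioi (0:ℝ), g x
      = C * (1/2 * ((1/(σ^2)⁻¹) ^ ϑ * Real.Gamma ϑ)) := by
    rw [hgdef, integral_const_mul]
    congr 1
    have := gauss_gamma hb hϑ
    rw [← this]
  rw [hint]
  have e4 : (1/(σ^2)⁻¹ : ℝ) = σ^2 := by field_simp
  have e5 : ((σ:ℝ)^2) ^ ϑ = σ ^ (2*ϑ) := by
    rw [← rpow_natCast σ 2, ← rpow_mul hσ.le]
    norm_num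
  have e6 : c ^ s = r ^ s * σ ^ s := Real.mul_rpow hr0.le hσ.le
  rw [hC, e4, e5, e6]
  have e7 : σ ^ s * σ ^ (2*ϑ) / σ ^ (2*m) = 1 := by
    rw [← Real.rpow_add hσ, ← Real.rpow_sub hσ]
    simp only [hsdef]
    rw [show 2*(m-ϑ) + 2*ϑ - 2*m = 0 by ring, rpow_zero]
  calc 2 / Real.Gamma m / σ ^ (2*m) * (r ^ s * σ ^ s) * (1/2 * (σ ^ (2*ϑ) * Real.Gamma ϑ))
      = Real.Gamma ϑ / Real.Gamma m * r ^ s * (σ ^ s * σ ^ (2*ϑ) / σ ^ (2*m)) := by ring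
    _ = Real.Gamma ϑ / Real.Gamma m * r ^ s := by rw [e7, mul_one]

lemma nakagami_up_moment {m σ z : ℝ} (hm0 : 0 < m) (hσ : 0 < σ) (hz : Real.sqrt m * σ ≤ z)
    {Ω : Type*} [MeasurableSpace Ω] {P : Measure Ω} {Y : Ω → ℝ} (hY : Measurable Y)
    (hd : Measure.map Y P = volume.withDensity (fun x => ENNReal.ofReal
        (if 0 < x then
          2 / Real.Gamma m * (x ^ (2 * m - 1) / σ ^ (2 * m)) * Real.exp (-x ^ 2 / σ ^ 2)
        else 0))) :
    ∫⁻ ω, ENNReal.ofReal (Real.exp (((σ^2)⁻¹ - m / z^2) * ((Y ω)^2 - z^2))) ∂P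
      = ENNReal.ofReal ((z ^ 2 / (m * σ ^ 2)) ^ m * Real.exp (m - z ^ 2 / σ ^ 2)) := by
  have hΓm : 0 < Real.Gamma m := Real.Gamma_pos_of_pos hm0
  have hz0 : 0 < z := lt_of_lt_of_le (mul_pos (Real.sqrt_pos.mpr hm0) hσ) hz
  have hzne : z ≠ 0 := ne_of_gt hz0
  have hσne : σ ≠ 0 := ne_of_gt hσ
  set t : ℝ := (σ^2)⁻¹ - m / z^2 with ht
  set b : ℝ := m / z^2 with hb
  have hb0 : 0 < b := div_pos hm0 (by positivity)
  set φ : ℝ → ENNReal := fun x => ENNReal.ofReal (Real.exp (t * (x^2 - z^2))) with hφdef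
  have hφm : Measurable φ := Measurable.ennreal_ofReal (by fun_prop)
  have hσ2m : (0:ℝ) < σ ^ (2*m) := rpow_pos_of_pos hσ _
  set C : ℝ := 2 / Real.Gamma m / σ ^ (2*m) * Real.exp (-(t*z^2)) with hC
  have hC0 : 0 ≤ C := by positivity
  set g : ℝ → ℝ := fun x => C * (x ^ (2*m - 1) * Real.exp (-(b * x ^ 2))) with hgdef
  have hexp : ∀ x : ℝ, Real.exp (-x^2/σ^2) * Real.exp (t * (x^2 - z^2))
      = Real.exp (-(t*z^2)) * Real.exp (-(b * x^2)) := by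
    intro x
    rw [← Real.exp_add, ← Real.exp_add]
    congr 1
    simp only [ht, hb]
    field_simp
    ring
  have key : ∫⁻ ω, φ (Y ω) ∂P = ENNReal.ofReal (∫ x in Ioi (0:ℝ), g x) := by
    refine lintegral_nakagami hY hd φ hφm g (fun x hx => ?_) ?_ (fun x hx => ?_)
    · have hx0 : (0:ℝ) < x := hx
      have hden : 0 ≤ 2 / Real.Gamma m * (x ^ (2 * m - 1) / σ ^ (2 * m))
          * Real.exp (-x ^ 2 / σ ^ 2) := by positivity
      rw [hφdef, ← ENNReal.ofReal_mul hden]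
      congr 1
      calc 2 / Real.Gamma m * (x ^ (2 * m - 1) / σ ^ (2 * m)) * Real.exp (-x ^ 2 / σ ^ 2)
            * Real.exp (t * (x^2 - z^2))
          = 2 / Real.Gamma m / σ ^ (2*m) * (x ^ (2*m-1)
              * (Real.exp (-x^2/σ^2) * Real.exp (t * (x^2 - z^2)))) := by ring
        _ = g x := by rw [hexp x, hgdef]; ring
    · apply Integrable.const_mul
      have := integrableOn_rpow_mul_exp_neg_mul_sq hb0 (s := 2*m - 1) (by linarith)
      refine this.congr_fun (fun x hx => ?_) measurableSet_Ioi
      simp [neg_mul]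
    · have hx0 : (0:ℝ) < x := hx
      simp only [hgdef]
      positivity
  rw [key]
  congr 1
  rw [hgdef, integral_const_mul, gauss_gamma hb0 hm0]
  have e1 : (1/b : ℝ) = z^2/m := by rw [hb, one_div_div]
  have e2 : Real.exp (-(t*z^2)) = Real.exp (m - z^2/σ^2) := by
    congr 1
    simp only [ht]
    have : ((σ^2)⁻¹ - m / z ^ 2) * z ^ 2 = z^2/σ^2 - m := by
      field_simp
    rw [this]
    ring
  have e3 : (z ^ 2 / (m * σ ^ 2)) ^ m = (z^2/m) ^ m * (σ ^ (2*m))⁻¹ := by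
    have : z ^ 2 / (m * σ ^ 2) = (z^2/m) * ((σ:ℝ)^2)⁻¹ := by field_simp
    rw [this, Real.mul_rpow (by positivity) (by positivity),
      Real.inv_rpow (sq_nonneg σ)]
    congr 2
    rw [← rpow_natCast σ 2, ← rpow_mul hσ.le]
    norm_num
  rw [hC, e1, e2, e3]
  field_simp

/-- Tail bounds for the sample mean of `n` i.i.d. Nakagami random variables
with parameters `m ≥ 1/2` and `σ > 0`. -/
theorem nakagami_sample_mean_tail
    {Ω : Type*} [MeasurableSpace Ω] (P : Measure Ω) [IsProbabilityMeasure P]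
    (n : ℕ) (hn : 0 < n) (X : Fin n → Ω → ℝ) (m σ : ℝ) (hm : 1 / 2 ≤ m) (hσ : 0 < σ)
    (hmeas : ∀ i, Measurable (X i))
    (hindep : iIndepFun X P)
    (hdist : ∀ i, Measure.map (X i) P =
      volume.withDensity (fun x => ENNReal.ofReal
        (if 0 < x then
          2 / Real.Gamma m * (x ^ (2 * m - 1) / σ ^ (2 * m)) * Real.exp (-x ^ 2 / σ ^ 2)
        else 0)))
    :
    (∀ ϑ : ℝ, 0 < ϑ → ϑ ≤ m →
      P {ω | (∑ i, X i ω) / n ≤ Real.Gamma (ϑ + 1 / 2) / Real.Gamma ϑ * σ} ≤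
        ENNReal.ofReal
          ((Real.Gamma ϑ / Real.Gamma m
            * (Real.Gamma (ϑ + 1 / 2) / Real.Gamma ϑ) ^ (2 * (m - ϑ))) ^ n)) ∧
    (∀ z : ℝ, Real.sqrt m * σ ≤ z →
      P {ω | z ≤ (∑ i, X i ω) / n} ≤
        ENNReal.ofReal
          (((z ^ 2 / (m * σ ^ 2)) ^ m * Real.exp (m - z ^ 2 / σ ^ 2)) ^ n)) := by
  have hm0 : 0 < m := lt_of_lt_of_le (by norm_num) hm
  have hΓm : 0 < Real.Gamma m := Real.Gamma_pos_of_pos hm0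
  have hn' : (0:ℝ) < n := by exact_mod_cast hn
  constructor
  · -- lower tail
    intro ϑ hϑ hϑm
    have hΓϑ : 0 < Real.Gamma ϑ := Real.Gamma_pos_of_pos hϑ
    have hΓh : 0 < Real.Gamma (ϑ + 1/2) := Real.Gamma_pos_of_pos (by linarith)
    set c : ℝ := Real.Gamma (ϑ + 1/2) / Real.Gamma ϑ * σ with hcdef
    have hc0 : 0 < c := by positivity
    set s : ℝ := 2*(m-ϑ) with hsdef
    have hs0 : 0 ≤ s := by simp only [hsdef]; linarith
    set φ : ℝ → ENNReal := fun x => (ENNReal.ofReal (x / c)) ^ (-s) with hφdef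
    have hφm : Measurable φ :=
      (Measurable.ennreal_ofReal (measurable_id.div_const c)).pow measurable_const
    set B : ℝ := Real.Gamma ϑ / Real.Gamma m
        * (Real.Gamma (ϑ + 1/2) / Real.Gamma ϑ) ^ (2 * (m - ϑ)) with hBdef
    have hB0 : 0 ≤ B := by positivity
    have hmk : ∀ ω ∈ {ω : Ω | (∑ i, X i ω) / n ≤ c}, (1:ENNReal) ≤ ∏ i, φ (X i ω) := by
      intro ω hω
      simp only [Set.mem_setOf_eq] at hω
      by_cases hsz : s = 0
      · simp [hφdef, hsz]
      · have hspos : 0 < s := lt_of_le_of_ne hs0 (Ne.symm hsz)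
        by_cases hpos : ∀ i, 0 < X i ω
        · set p : Fin n → ℝ := fun i => X i ω / c with hpdef
          have hp0 : ∀ i, 0 ≤ p i := fun i => (div_pos (hpos i) hc0).le
          have hsum : ∑ i, p i ≤ n := by
            have h1 : ∑ i, X i ω ≤ n * c := by
              rw [div_le_iff₀ hn'] at hω; linarith [hω]
            have : ∑ i, p i = (∑ i, X i ω) / c := by
              simp only [hpdef]; rw [Finset.sum_div]
            rw [this, div_le_iff₀ hc0]
            linarith
          have hprod : ∏ i, p i ≤ 1 := prod_le_one_of_sum hn p hp0 hsum
          have hppos : 0 < ∏ i, p i := Finset.prod_pos (fun i _ => div_pos (hpos i) hc0)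
          have hcalc : ∏ i, φ (X i ω) = ENNReal.ofReal ((∏ i, p i) ^ (-s)) := by
            calc ∏ i, φ (X i ω) = ∏ i, ENNReal.ofReal ((p i) ^ (-s)) := by
                  refine Finset.prod_congr rfl (fun i _ => ?_)
                  rw [hφdef]
                  exact ENNReal.ofReal_rpow_of_pos (div_pos (hpos i) hc0)
              _ = ENNReal.ofReal (∏ i, (p i) ^ (-s)) :=
                  (ENNReal.ofReal_prod_of_nonneg (fun i _ => rpow_nonneg (hp0 i) _)).symm
              _ = ENNReal.ofReal ((∏ i, p i) ^ (-s)) := by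
                  rw [← Real.finset_prod_rpow _ _ (fun i _ => hp0 i)]
          rw [hcalc]
          exact ENNReal.one_le_ofReal.mpr
            (Real.one_le_rpow_of_pos_of_le_one_of_nonpos hppos hprod (by linarith))
        · push_neg at hpos
          obtain ⟨i, hi⟩ := hpos
          have htop : φ (X i ω) = ⊤ := by
            rw [hφdef]
            simp only
            rw [ENNReal.ofReal_eq_zero.mpr (div_nonpos_of_nonpos_of_nonneg hi hc0.le)]
            exact ENNReal.zero_rpow_of_neg (by linarith)
          have hne : ∀ j, φ (X j ω) ≠ 0 := by
            intro j h
            rcases ENNReal.rpow_eq_zero_iff.mp h with ⟨h1, h2⟩ | ⟨h1, h2⟩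
            · linarith
            · exact absurd h1 ENNReal.ofReal_ne_top
          have h2 : φ (X i ω) * ∏ j ∈ Finset.univ.erase i, φ (X j ω) = ⊤ := by
            rw [htop]
            exact ENNReal.top_mul (Finset.prod_ne_zero_iff.mpr (fun j _ => hne j))
          have h3 := Finset.mul_prod_erase Finset.univ (fun j => φ (X j ω)) (Finset.mem_univ i)
          calc (1:ENNReal) ≤ ⊤ := le_top
            _ = ∏ j, φ (X j ω) := by rw [← h3]; exact h2.symm
    calc P {ω | (∑ i, X i ω) / n ≤ c}
        ≤ ∫⁻ ω, ∏ i, φ (X i ω) ∂P := by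
          refine meas_le_lintegral_of_one_le ?_ hmk
          exact (Finset.measurable_prod _ (fun i _ => hφm.comp (hmeas i))).aemeasurable
      _ = ∏ i, ∫⁻ ω, φ (X i ω) ∂P := by
          exact lintegral_prod_indep (fun i => hφm.comp (hmeas i))
            (hindep.comp (fun _ => φ) (fun _ => hφm)) Finset.univ
      _ = ∏ _i : Fin n, ENNReal.ofReal B := by
          refine Finset.prod_congr rfl (fun i _ => ?_)
          rw [hφdef, hBdef]
          exact nakagami_low_moment hσ hϑ hϑm (hmeas i) (hdist i)
      _ = ENNReal.ofReal (B ^ n) := by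
          rw [Finset.prod_const, Finset.card_univ, Fintype.card_fin,
            ENNReal.ofReal_pow hB0]
      _ ≤ ENNReal.ofReal ((Real.Gamma ϑ / Real.Gamma m
            * (Real.Gamma (ϑ + 1 / 2) / Real.Gamma ϑ) ^ (2 * (m - ϑ))) ^ n) := by
          rw [hBdef]
  · -- upper tail
    intro z hz
    have hz0 : 0 < z := lt_of_lt_of_le (mul_pos (Real.sqrt_pos.mpr hm0) hσ) hz
    have hz2 : m * σ^2 ≤ z^2 := by
      have := pow_le_pow_left₀ (by positivity : (0:ℝ) ≤ Real.sqrt m * σ) hz 2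
      rwa [mul_pow, sq_sqrt hm0.le] at this
    set t : ℝ := (σ^2)⁻¹ - m / z^2 with htdef
    have ht0 : 0 ≤ t := by
      rw [htdef, sub_nonneg, inv_eq_one_div, div_le_div_iff₀ (by positivity) (by positivity)]
      linarith
    set φ : ℝ → ENNReal := fun x => ENNReal.ofReal (Real.exp (t * (x^2 - z^2))) with hφdef
    have hφm : Measurable φ := Measurable.ennreal_ofReal (by fun_prop)
    set B : ℝ := (z ^ 2 / (m * σ ^ 2)) ^ m * Real.exp (m - z ^ 2 / σ ^ 2) with hBdef
    have hB0 : 0 ≤ B := by positivity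
    have hmk : ∀ ω ∈ {ω : Ω | z ≤ (∑ i, X i ω) / n}, (1:ENNReal) ≤ ∏ i, φ (X i ω) := by
      intro ω hω
      simp only [Set.mem_setOf_eq] at hω
      have hS : (n:ℝ) * z ≤ ∑ i, X i ω := by
        rw [le_div_iff₀ hn'] at hω; linarith
      have hCS : (∑ i, X i ω)^2 ≤ n * ∑ i, (X i ω)^2 := by
        have := sq_sum_le_card_mul_sum_sq (s := Finset.univ) (f := fun i => X i ω)
        simpa [Finset.card_univ] using this
      have hsq : ((n:ℝ) * z)^2 ≤ (∑ i, X i ω)^2 :=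
        pow_le_pow_left₀ (by positivity) hS 2
      have hkey : (n:ℝ) * z^2 ≤ ∑ i, (X i ω)^2 := by
        nlinarith [hsq, hCS, hn']
      have hsum : ∑ i, t * ((X i ω)^2 - z^2) = t * ((∑ i, (X i ω)^2) - n * z^2) := by
        rw [← Finset.mul_sum, Finset.sum_sub_distrib, Finset.sum_const, Finset.card_univ,
          Fintype.card_fin, nsmul_eq_mul]
      have hnn : 0 ≤ ∑ i, t * ((X i ω)^2 - z^2) := by
        rw [hsum]
        apply mul_nonneg ht0
        linarith
      calc (1:ENNReal) = ENNReal.ofReal 1 := ENNReal.ofReal_one.symm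
        _ ≤ ENNReal.ofReal (Real.exp (∑ i, t * ((X i ω)^2 - z^2))) :=
            ENNReal.ofReal_le_ofReal (Real.one_le_exp hnn)
        _ = ∏ i, φ (X i ω) := by
            rw [Real.exp_sum, ENNReal.ofReal_prod_of_nonneg
              (fun i _ => (Real.exp_pos _).le)]
    calc P {ω | z ≤ (∑ i, X i ω) / n}
        ≤ ∫⁻ ω, ∏ i, φ (X i ω) ∂P := by
          refine meas_le_lintegral_of_one_le ?_ hmk
          exact (Finset.measurable_prod _ (fun i _ => hφm.comp (hmeas i))).aemeasurable
      _ = ∏ i, ∫⁻ ω, φ (X i ω) ∂P := by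
          exact lintegral_prod_indep (fun i => hφm.comp (hmeas i))
            (hindep.comp (fun _ => φ) (fun _ => hφm)) Finset.univ
      _ = ∏ _i : Fin n, ENNReal.ofReal B := by
          refine Finset.prod_congr rfl (fun i _ => ?_)
          rw [hφdef, hBdef]
          exact nakagami_up_moment hm0 hσ hz (hmeas i) (hdist i)
      _ = ENNReal.ofReal (B ^ n) := by
          rw [Finset.prod_const, Finset.card_univ, Fintype.card_fin,
            ENNReal.ofReal_pow hB0]
      _ ≤ ENNReal.ofReal (((z ^ 2 / (m * σ ^ 2)) ^ m
            * Real.exp (m - z ^ 2 / σ ^ 2)) ^ n) := by rw [hBdef]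
end
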